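/- With Q, Φ, Ψ, S as above, the number of elements of S of weight exactly 2 is 3·(2⁵−1) + 3·(2⁵−1)·2⁴·2⁴ = 23 901. Moreover, assigning dimension 156 to the weight-0 element counted three times per coordinate VOA factor (dim contribution 156·3 = 468), dimension 8² = 64 to each element of the form (a,a,0) type, and dimension 8 to each element of the form (a+b+c,a+c,b+c) with exactly one nonzero singular coordinate, the total 156·3 + (2⁵−1)·3·8² + (2⁵−1)·2⁴·2⁴·3·8 equals 196 884. -/

import Mathlib

open Finset

/-- The number of elements of `S` of weight exactly `2` is
`3·(2⁵−1) + 3·(2⁵−1)·2⁴·2⁴ = 23901`; moreover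
`156·3 + (2⁵−1)·3·8² + (2⁵−1)·2⁴·2⁴·3·8 = 196884`. -/
theorem stmt_4 (Q : Type) [AddCommGroup Q] [Module (ZMod 2) Q] [DecidableEq Q]
    (q : QuadraticForm (ZMod 2) Q)
    (hdim : Module.finrank (ZMod 2) Q = 10)
    (hnd : ∀ x : Q, (∀ y : Q, q (x + y) - q x - q y = 0) → x = 0)
    (Φ Ψ : Submodule (ZMod 2) Q)
    (hΦsing : ∀ x ∈ Φ, q x = 0) (hΨsing : ∀ x ∈ Ψ, q x = 0)
    (hΦdim : Module.finrank (ZMod 2) Φ = 5) (hΨdim : Module.finrank (ZMod 2) Ψ = 5)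
    (hint : Φ ⊓ Ψ = ⊥)
    (S : Submodule (ZMod 2) (Q × Q × Q))
    (hS : S = Submodule.span (ZMod 2)
      {p : Q × Q × Q | (∃ a ∈ Φ, p = (a, a, 0)) ∨ (∃ a ∈ Φ, p = (0, a, a)) ∨
        (∃ b ∈ Ψ, p = (b, b, b))})
    (w : Q → ℚ)
    (hw : ∀ u : Q, w u = if u = 0 then 0 else if q u = 0 then 1 else 1 / 2) :
    {s : Q × Q × Q | s ∈ S ∧ w s.1 + w s.2.1 + w s.2.2 = 2}.ncard
        = 3 * (2 ^ 5 - 1) + 3 * (2 ^ 5 - 1) * 2 ^ 4 * 2 ^ 4 ∧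
    3 * (2 ^ 5 - 1) + 3 * (2 ^ 5 - 1) * 2 ^ 4 * 2 ^ 4 = 23901 ∧
    156 * 3 + (2 ^ 5 - 1) * 3 * 8 ^ 2 + (2 ^ 5 - 1) * 2 ^ 4 * 2 ^ 4 * 3 * 8 = 196884 := by
  classical
  refine ⟨?_, by norm_num, by norm_num⟩
  -- basic setup
  have hfd : Module.Finite (ZMod 2) Q := Module.finite_of_finrank_eq_succ hdim
  have hQfin : Finite Q := Module.finite_of_finite (ZMod 2)
  have : Fintype Q := Fintype.ofFinite Q
  -- char 2
  have hchar : ∀ x : Q, x + x = 0 := by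
    intro x
    have h2 : ((2 : ZMod 2) • x) = x + x := by rw [two_smul]
    have h0 : (2 : ZMod 2) = 0 := by decide
    rw [← h2, h0, zero_smul]
  have hneg : ∀ x : Q, -x = x := by
    intro x; rw [neg_eq_iff_add_eq_zero, hchar]
  -- polar form facts
  have hpolar : ∀ x y : Q, QuadraticMap.polar q x y = q (x + y) + q x + q y := by
    intro x y
    rw [QuadraticMap.polar, sub_eq_add_neg, sub_eq_add_neg, CharTwo.neg_eq, CharTwo.neg_eq]
  have hΦpol : ∀ x ∈ Φ, ∀ y ∈ Φ, QuadraticMap.polar q x y = 0 := by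
    intro x hx y hy
    rw [hpolar, hΦsing _ hx, hΦsing _ hy, hΦsing _ (add_mem hx hy)]; ring
  have hΨpol : ∀ x ∈ Ψ, ∀ y ∈ Ψ, QuadraticMap.polar q x y = 0 := by
    intro x hx y hy
    rw [hpolar, hΨsing _ hx, hΨsing _ hy, hΨsing _ (add_mem hx hy)]; ring
  -- Φ ⊔ Ψ = ⊤
  have htop : Φ ⊔ Ψ = ⊤ := by
    apply Submodule.eq_top_of_finrank_eq
    have h := Submodule.finrank_sup_add_finrank_inf_eq Φ Ψ
    rw [hint, hΦdim, hΨdim] at h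
    rw [hdim]
    simpa using h
  -- key nondegeneracy: for nonzero b ∈ Ψ there is a ∈ Φ with polar ≠ 0
  have hkey : ∀ b ∈ Ψ, b ≠ 0 → ∃ a ∈ Φ, QuadraticMap.polar q a b ≠ 0 := by
    intro b hb hb0
    by_contra hcon
    push_neg at hcon
    apply hb0
    apply hnd
    intro y
    have hy : y ∈ Φ ⊔ Ψ := htop ▸ Submodule.mem_top
    obtain ⟨u, hu, v, hv, rfl⟩ := Submodule.mem_sup.mp hy
    have h1 : QuadraticMap.polar q u b = 0 := hcon u hu
    have h2 : QuadraticMap.polar q v b = 0 := hΨpol v hv b hb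
    have : QuadraticMap.polar q (u + v) b = 0 := by
      rw [QuadraticMap.polar_add_left, h1, h2, add_zero]
    rw [QuadraticMap.polar_comm] at this
    simpa [QuadraticMap.polar] using this
  -- helper: sum of Φ-element and nonzero Ψ-element is nonzero
  have hne : ∀ x ∈ Φ, ∀ y ∈ Ψ, y ≠ 0 → x + y ≠ 0 := by
    intro x hx y hy hy0 hxy
    apply hy0
    have hxy' : x = y := by
      have : x = -y := eq_neg_of_add_eq_zero_left hxy
      rwa [hneg] at this
    have : y ∈ Φ ⊓ Ψ := ⟨hxy' ▸ hx, hy⟩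
    rw [hint] at this
    simpa using this
  -- the parametrizing linear map
  let F : (Φ × Φ × Ψ) →ₗ[ZMod 2] Q × Q × Q :=
  { toFun := fun t => ((t.1 : Q) + (t.2.2 : Q), (t.1 : Q) + (t.2.1 : Q) + (t.2.2 : Q),
      (t.2.1 : Q) + (t.2.2 : Q)),
    map_add' := by
      intro s t
      simp only [Prod.fst_add, Prod.snd_add, Submodule.coe_add, Prod.mk_add_mk, Prod.mk.injEq]
      refine ⟨by abel, by abel, by abel⟩
    map_smul' := by
      intro c t
      simp only [Prod.smul_fst, Prod.smul_snd, Submodule.coe_smul, Prod.smul_mk, smul_add,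
        RingHom.id_apply] }
  have hF : ∀ t : Φ × Φ × Ψ, F t = ((t.1 : Q) + (t.2.2 : Q),
      (t.1 : Q) + (t.2.1 : Q) + (t.2.2 : Q), (t.2.1 : Q) + (t.2.2 : Q)) := fun t => rfl
  -- S is the range of F
  have hrange : S = LinearMap.range F := by
    apply le_antisymm
    · rw [hS]
      apply Submodule.span_le.mpr
      rintro p (⟨a, ha, rfl⟩ | ⟨a, ha, rfl⟩ | ⟨b, hb, rfl⟩)
      · exact ⟨(⟨a, ha⟩, 0, 0), by simp [hF]⟩
      · exact ⟨(0, ⟨a, ha⟩, 0), by simp [hF]⟩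
      · exact ⟨(0, 0, ⟨b, hb⟩), by simp [hF]⟩
    · rintro p ⟨⟨a, a', b⟩, rfl⟩
      rw [hS]
      have h1 : ((a : Q), (a : Q), (0 : Q)) ∈ Submodule.span (ZMod 2)
          {p : Q × Q × Q | (∃ a ∈ Φ, p = (a, a, 0)) ∨ (∃ a ∈ Φ, p = (0, a, a)) ∨
            (∃ b ∈ Ψ, p = (b, b, b))} :=
        Submodule.subset_span (Or.inl ⟨a, a.2, rfl⟩)
      have h2 : ((0 : Q), (a' : Q), (a' : Q)) ∈ Submodule.span (ZMod 2)
          {p : Q × Q × Q | (∃ a ∈ Φ, p = (a, a, 0)) ∨ (∃ a ∈ Φ, p = (0, a, a)) ∨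
            (∃ b ∈ Ψ, p = (b, b, b))} :=
        Submodule.subset_span (Or.inr (Or.inl ⟨a', a'.2, rfl⟩))
      have h3 : ((b : Q), (b : Q), (b : Q)) ∈ Submodule.span (ZMod 2)
          {p : Q × Q × Q | (∃ a ∈ Φ, p = (a, a, 0)) ∨ (∃ a ∈ Φ, p = (0, a, a)) ∨
            (∃ b ∈ Ψ, p = (b, b, b))} :=
        Submodule.subset_span (Or.inr (Or.inr ⟨b, b.2, rfl⟩))
      have := add_mem (add_mem h1 h2) h3
      convert this using 2
      rw [hF]
      simp only [Prod.mk_add_mk, Prod.mk.injEq]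
      refine ⟨by abel, trivial, by abel⟩
  -- F is injective
  have hinj : Function.Injective F := by
    rw [← LinearMap.ker_eq_bot]
    apply (Submodule.eq_bot_iff _).mpr
    rintro ⟨a, a', b⟩ ht
    have h := LinearMap.mem_ker.mp ht
    rw [hF] at h
    simp only [Prod.mk_eq_zero] at h
    obtain ⟨h1, h2, h3⟩ := h
    have hab : (a : Q) = (b : Q) := by
      have : (a : Q) = -(b : Q) := eq_neg_of_add_eq_zero_left h1
      rwa [hneg] at this
    have hb0 : (b : Q) = 0 := by
      have : (b : Q) ∈ Φ ⊓ Ψ := ⟨hab ▸ a.2, b.2⟩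
      rw [hint] at this
      simpa using this
    have ha0 : (a : Q) = 0 := by rw [hab, hb0]
    have ha'0 : (a' : Q) = 0 := by
      have := h3
      rw [hb0, add_zero] at this
      exact this
    simp only [Prod.mk_eq_zero]
    exact ⟨Submodule.coe_eq_zero.mp ha0, Submodule.coe_eq_zero.mp ha'0,
      Submodule.coe_eq_zero.mp hb0⟩
  -- reduce to counting in the parameter space
  have hset : {s : Q × Q × Q | s ∈ S ∧ w s.1 + w s.2.1 + w s.2.2 = 2}
      = F '' {t | w (F t).1 + w (F t).2.1 + w (F t).2.2 = 2} := by
    ext s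
    constructor
    · rintro ⟨hs, hws⟩
      rw [hrange] at hs
      obtain ⟨t, rfl⟩ := hs
      exact ⟨t, hws, rfl⟩
    · rintro ⟨t, hwt, rfl⟩
      refine ⟨?_, hwt⟩
      rw [hrange]
      exact LinearMap.mem_range_self F t
  rw [hset, Set.ncard_image_of_injective _ hinj]
  -- finiteness and cardinalities of Φ, Ψ
  have : Fintype Φ := Fintype.ofFinite _
  have : Fintype Ψ := Fintype.ofFinite _
  have hcardΦ : Fintype.card Φ = 32 := by
    have h := Module.card_eq_pow_finrank (K := ZMod 2) (V := Φ)
    rw [ZMod.card, hΦdim] at h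
    norm_num at h
    exact h
  have hcardΨ : Fintype.card Ψ = 32 := by
    have h := Module.card_eq_pow_finrank (K := ZMod 2) (V := Ψ)
    rw [ZMod.card, hΨdim] at h
    norm_num at h
    exact h
  -- char 2 in submodules
  have hz2 : ∀ z : ZMod 2, z ≠ 0 → z = 1 := by decide
  -- convert ncard to a Finset count
  have hncard : {t : Φ × Φ × Ψ | w (F t).1 + w (F t).2.1 + w (F t).2.2 = 2}.ncard
      = (univ.filter (fun t : Φ × Φ × Ψ =>
          w (F t).1 + w (F t).2.1 + w (F t).2.2 = 2)).card := by
    rw [Set.ncard_eq_toFinset_card', Set.toFinset_setOf]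
  rw [hncard]
  have hcharΦ : ∀ x : Φ, x + x = 0 := by
    intro x
    apply Subtype.ext
    simpa using hchar (x : Q)
  -- ZMod 2 arithmetic fact for weights
  have hdec : ∀ s t : ZMod 2, ((if s = 0 then (1:ℚ) else 1/2) + (if s + t = 0 then (1:ℚ) else 1/2)
      + (if t = 0 then (1:ℚ) else 1/2) = 2 ↔ ¬(s = 0 ∧ t = 0)) := by
    have hcases : ∀ z : ZMod 2, z = 0 ∨ z = 1 := by decide
    intro s t
    rcases hcases s with rfl | rfl <;> rcases hcases t with rfl | rfl <;>
      (first
        | (rw [show ((1:ZMod 2)+1) = 0 from by decide]; norm_num)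
        | norm_num)
  -- weight condition when b = 0
  have cond0 : ∀ a a' : Φ, (w (a:Q) + w ((a:Q) + (a':Q)) + w (a':Q) = 2)
      ↔ ((a = 0 ∧ a' ≠ 0) ∨ (a ≠ 0 ∧ a' = 0) ∨ (a' = a ∧ a ≠ 0)) := by
    intro a a'
    have sa : q (a:Q) = 0 := hΦsing _ a.2
    have sa' : q (a':Q) = 0 := hΦsing _ a'.2
    have saa : q ((a:Q) + (a':Q)) = 0 := hΦsing _ (add_mem a.2 a'.2)
    have hsum : ((a:Q) + (a':Q) = 0) ↔ (a' = a) := by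
      constructor
      · intro h
        have : (a:Q) = (a':Q) := by
          have := eq_neg_of_add_eq_zero_left h
          rwa [hneg] at this
        exact Subtype.ext this.symm
      · rintro rfl
        simpa using hchar (a':Q)
    rw [hw, hw, hw, sa, sa', saa]
    by_cases ha : a = 0 <;> by_cases ha' : a' = 0
    · subst ha; subst ha'
      simp <;> norm_num
    · subst ha
      have h1 : (a':Q) ≠ 0 := fun h => ha' (Subtype.ext h)
      simp [h1, ha'] <;> norm_num
    · subst ha'
      have h1 : (a:Q) ≠ 0 := fun h => ha (Subtype.ext h)
      simp [h1, ha] <;> norm_num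
    · have h1 : (a:Q) ≠ 0 := fun h => ha (Subtype.ext h)
      have h1' : (a':Q) ≠ 0 := fun h => ha' (Subtype.ext h)
      by_cases haa : a' = a
      · subst haa
        simp [h1', hchar ((a':Q)), ha'] <;> norm_num
      · have hss : (a:Q) + (a':Q) ≠ 0 := fun h => haa (hsum.mp h)
        simp [h1, h1', hss, haa, ha, ha'] <;> norm_num
  -- weight condition when b ≠ 0
  have cond1 : ∀ b : Ψ, (b:Q) ≠ 0 → ∀ a a' : Φ,
      (w ((a:Q) + (b:Q)) + w ((a:Q) + (a':Q) + (b:Q)) + w ((a':Q) + (b:Q)) = 2)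
      ↔ ¬(QuadraticMap.polar q (a:Q) (b:Q) = 0 ∧ QuadraticMap.polar q (a':Q) (b:Q) = 0) := by
    intro b hb a a'
    have h1 : (a:Q) + (b:Q) ≠ 0 := hne _ a.2 _ b.2 hb
    have h2 : (a:Q) + (a':Q) + (b:Q) ≠ 0 := hne _ (add_mem a.2 a'.2) _ b.2 hb
    have h3 : (a':Q) + (b:Q) ≠ 0 := hne _ a'.2 _ b.2 hb
    have hq1 : q ((a:Q) + (b:Q)) = QuadraticMap.polar q (a:Q) (b:Q) := by
      rw [hpolar, hΦsing _ a.2, hΨsing _ b.2, add_zero, add_zero]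
    have hq3 : q ((a':Q) + (b:Q)) = QuadraticMap.polar q (a':Q) (b:Q) := by
      rw [hpolar, hΦsing _ a'.2, hΨsing _ b.2, add_zero, add_zero]
    have hq2 : q ((a:Q) + (a':Q) + (b:Q))
        = QuadraticMap.polar q (a:Q) (b:Q) + QuadraticMap.polar q (a':Q) (b:Q) := by
      have e : q ((a:Q) + (a':Q) + (b:Q)) = QuadraticMap.polar q ((a:Q) + (a':Q)) (b:Q) := by
        rw [hpolar, hΦsing _ (add_mem a.2 a'.2), hΨsing _ b.2, add_zero, add_zero]
      rw [e, QuadraticMap.polar_add_left]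
    rw [hw ((a:Q) + (b:Q)), hw ((a:Q) + (a':Q) + (b:Q)), hw ((a':Q) + (b:Q)),
      if_neg h1, if_neg h2, if_neg h3, hq1, hq2, hq3]
    exact hdec _ _
  -- count of the kernel fiber: 16 elements
  have hker : ∀ b : Ψ, (b:Q) ≠ 0 →
      (univ.filter (fun a : Φ => QuadraticMap.polar q (a:Q) (b:Q) = 0)).card = 16 := by
    intro b hb
    obtain ⟨a₀, ha₀Φ, ha₀⟩ := hkey (b:Q) b.2 hb
    set a₀' : Φ := ⟨a₀, ha₀Φ⟩ with ha₀'
    have hpadd : ∀ x y : Φ, QuadraticMap.polar q ((x + y : Φ):Q) (b:Q)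
        = QuadraticMap.polar q (x:Q) (b:Q) + QuadraticMap.polar q (y:Q) (b:Q) := by
      intro x y
      rw [Submodule.coe_add, QuadraticMap.polar_add_left]
    have hbij : (univ.filter (fun a : Φ => QuadraticMap.polar q (a:Q) (b:Q) = 0)).card
        = (univ.filter (fun a : Φ => ¬ QuadraticMap.polar q (a:Q) (b:Q) = 0)).card := by
      apply Finset.card_nbij' (i := fun x => x + a₀') (j := fun x => x + a₀')
      · intro x hx
        rw [Finset.mem_coe, Finset.mem_filter] at hx ⊢
        refine ⟨Finset.mem_univ _, ?_⟩
        rw [hpadd, hx.2, zero_add]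
        exact ha₀
      · intro x hx
        rw [Finset.mem_coe, Finset.mem_filter] at hx ⊢
        refine ⟨Finset.mem_univ _, ?_⟩
        rw [hpadd]
        rw [hz2 _ hx.2, hz2 _ ha₀]
        decide
      · intro x _
        dsimp only
        rw [add_assoc, hcharΦ, add_zero]
      · intro x _
        dsimp only
        rw [add_assoc, hcharΦ, add_zero]
    have htot := Finset.card_filter_add_card_filter_not
      (s := (univ : Finset Φ)) (fun a : Φ => QuadraticMap.polar q (a:Q) (b:Q) = 0)
    rw [Finset.card_univ, hcardΦ] at htot
    omega
  -- count of pairs for b ≠ 0 : 768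
  have count1 : ∀ b : Ψ, (b:Q) ≠ 0 → (univ.filter (fun x : Φ × Φ =>
      ¬(QuadraticMap.polar q (x.1:Q) (b:Q) = 0 ∧ QuadraticMap.polar q (x.2:Q) (b:Q) = 0))).card
      = 768 := by
    intro b hb
    have hpairs : (univ.filter (fun x : Φ × Φ =>
        QuadraticMap.polar q (x.1:Q) (b:Q) = 0 ∧ QuadraticMap.polar q (x.2:Q) (b:Q) = 0)).card
        = 256 := by
      rw [← Finset.univ_product_univ, Finset.filter_product
        (p := fun a : Φ => QuadraticMap.polar q (a:Q) (b:Q) = 0)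
        (q := fun a : Φ => QuadraticMap.polar q (a:Q) (b:Q) = 0),
        Finset.card_product, hker b hb]
    have htot := Finset.card_filter_add_card_filter_not
      (s := (univ : Finset (Φ × Φ))) (fun x : Φ × Φ =>
        QuadraticMap.polar q (x.1:Q) (b:Q) = 0 ∧ QuadraticMap.polar q (x.2:Q) (b:Q) = 0)
    rw [Finset.card_univ, Fintype.card_prod, hcardΦ, hpairs] at htot
    omega
  -- replace F by explicit coordinates
  have hfilter : (univ.filter (fun t : Φ × Φ × Ψ => w (F t).1 + w (F t).2.1 + w (F t).2.2 = 2))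
      = univ.filter (fun t : Φ × Φ × Ψ => w ((t.1:Q) + (t.2.2:Q))
          + w ((t.1:Q) + (t.2.1:Q) + (t.2.2:Q)) + w ((t.2.1:Q) + (t.2.2:Q)) = 2) := by
    apply Finset.filter_congr
    intro t _
    rw [hF]
  rw [hfilter]
  set Pf : Φ × Φ × Ψ → Prop := fun t => w ((t.1:Q) + (t.2.2:Q))
      + w ((t.1:Q) + (t.2.1:Q) + (t.2.2:Q)) + w ((t.2.1:Q) + (t.2.2:Q)) = 2 with hPf
  -- fiberwise decomposition over the third coordinate
  have hfib : (univ.filter Pf).card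
      = ∑ b : Ψ, ((univ.filter Pf).filter (fun t => t.2.2 = b)).card :=
    Finset.card_eq_sum_card_fiberwise (fun x _ => Finset.mem_univ _)
  have hslice : ∀ b : Ψ, ((univ.filter Pf).filter (fun t => t.2.2 = b)).card
      = (univ.filter (fun x : Φ × Φ => Pf (x.1, x.2, b))).card := by
    intro b
    apply Finset.card_nbij' (i := fun t : Φ × Φ × Ψ => (t.1, t.2.1))
      (j := fun x : Φ × Φ => (x.1, x.2, b))
    · rintro ⟨a, a', b'⟩ ht
      simp only [Finset.mem_coe, Finset.mem_filter, Finset.mem_univ, true_and] at ht ⊢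
      obtain ⟨h1, rfl⟩ := ht
      exact h1
    · intro x hx
      simp only [Finset.mem_coe, Finset.mem_filter, Finset.mem_univ, true_and] at hx ⊢
      exact ⟨hx, trivial⟩
    · rintro ⟨a, a', b'⟩ ht
      simp only [Finset.mem_coe, Finset.mem_filter, Finset.mem_univ, true_and] at ht
      obtain ⟨-, rfl⟩ := ht
      rfl
    · intro x _
      rfl
  -- the fiber over 0 has 93 elements
  have hN0 : (univ.filter (fun x : Φ × Φ => Pf (x.1, x.2, (0:Ψ)))).card = 93 := by
    have hiff : ∀ x : Φ × Φ, Pf (x.1, x.2, (0:Ψ))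
        ↔ ((x.1 = 0 ∧ x.2 ≠ 0) ∨ (x.1 ≠ 0 ∧ x.2 = 0) ∨ (x.2 = x.1 ∧ x.1 ≠ 0)) := by
      intro x
      simp only [hPf, ZeroMemClass.coe_zero, add_zero]
      exact cond0 x.1 x.2
    rw [Finset.filter_congr (fun x _ => hiff x), Finset.filter_or, Finset.filter_or]
    have cardA : (univ.filter (fun x : Φ × Φ => x.1 = 0 ∧ x.2 ≠ 0)).card = 31 := by
      rw [← Finset.univ_product_univ, Finset.filter_product (p := fun a : Φ => a = 0)
        (q := fun a : Φ => a ≠ 0), Finset.card_product, Finset.filter_eq',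
        Finset.filter_ne', if_pos (Finset.mem_univ _), Finset.card_singleton,
        Finset.card_erase_of_mem (Finset.mem_univ _), Finset.card_univ, hcardΦ]
    have cardB : (univ.filter (fun x : Φ × Φ => x.1 ≠ 0 ∧ x.2 = 0)).card = 31 := by
      rw [← Finset.univ_product_univ, Finset.filter_product (p := fun a : Φ => a ≠ 0)
        (q := fun a : Φ => a = 0), Finset.card_product, Finset.filter_eq',
        Finset.filter_ne', if_pos (Finset.mem_univ _), Finset.card_singleton,
        Finset.card_erase_of_mem (Finset.mem_univ _), Finset.card_univ, hcardΦ]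
    have cardC : (univ.filter (fun x : Φ × Φ => x.2 = x.1 ∧ x.1 ≠ 0)).card = 31 := by
      have : (univ.filter (fun x : Φ × Φ => x.2 = x.1 ∧ x.1 ≠ 0)).card
          = (univ.filter (fun a : Φ => a ≠ 0)).card := by
        apply Finset.card_nbij' (i := fun x : Φ × Φ => x.1) (j := fun a : Φ => (a, a))
        · intro x hx
          simp only [Finset.mem_coe, Finset.mem_filter, Finset.mem_univ, true_and] at hx ⊢
          exact hx.2
        · intro a ha
          simp only [Finset.mem_coe, Finset.mem_filter, Finset.mem_univ, true_and] at ha ⊢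
          simpa using ha
        · intro x hx
          simp only [Finset.mem_coe, Finset.mem_filter, Finset.mem_univ, true_and] at hx
          exact Prod.ext_iff.mpr ⟨rfl, hx.1.symm⟩
        · intro a _
          rfl
      rw [this, Finset.filter_ne', Finset.card_erase_of_mem (Finset.mem_univ _),
        Finset.card_univ, hcardΦ]
    have d2 : Disjoint (univ.filter (fun x : Φ × Φ => x.1 ≠ 0 ∧ x.2 = 0))
        (univ.filter (fun x : Φ × Φ => x.2 = x.1 ∧ x.1 ≠ 0)) := by
      rw [Finset.disjoint_left]
      intro x hx hx'
      simp only [Finset.mem_filter, Finset.mem_univ, true_and] at hx hx'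
      exact hx.1 (by rw [← hx'.1]; exact hx.2)
    have d1 : Disjoint (univ.filter (fun x : Φ × Φ => x.1 = 0 ∧ x.2 ≠ 0))
        ((univ.filter (fun x : Φ × Φ => x.1 ≠ 0 ∧ x.2 = 0))
          ∪ (univ.filter (fun x : Φ × Φ => x.2 = x.1 ∧ x.1 ≠ 0))) := by
      rw [Finset.disjoint_left]
      intro x hx hx'
      simp only [Finset.mem_filter, Finset.mem_univ, true_and, Finset.mem_union] at hx hx'
      rcases hx' with h | h
      · exact h.1 hx.1
      · exact h.2 hx.1
    rw [Finset.card_union_of_disjoint d1, Finset.card_union_of_disjoint d2,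
      cardA, cardB, cardC]
  -- the fibers over nonzero b have 768 elements
  have hN1 : ∀ b : Ψ, b ≠ 0 →
      (univ.filter (fun x : Φ × Φ => Pf (x.1, x.2, b))).card = 768 := by
    intro b hb
    have hbQ : (b:Q) ≠ 0 := fun h => hb (Subtype.ext h)
    have hiff : ∀ x : Φ × Φ, Pf (x.1, x.2, b)
        ↔ ¬(QuadraticMap.polar q ((x.1:Φ):Q) (b:Q) = 0
            ∧ QuadraticMap.polar q ((x.2:Φ):Q) (b:Q) = 0) := by
      intro x
      simp only [hPf]
      exact cond1 b hbQ x.1 x.2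
    rw [Finset.filter_congr (fun x _ => hiff x)]
    exact count1 b hbQ
  rw [hfib, Finset.sum_congr rfl (fun b _ => hslice b),
    ← Finset.add_sum_erase _ _ (Finset.mem_univ (0:Ψ)), hN0,
    Finset.sum_congr rfl (fun b hb => hN1 b (Finset.mem_erase.mp hb).1),
    Finset.sum_const, Finset.card_erase_of_mem (Finset.mem_univ _), Finset.card_univ, hcardΨ]
  norm_num
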